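/- Let S be a stabilizer group and G a subgroup of the Pauli group P on a finite type Q such that every element of G that commutes with all elements of S is a unit-modulus scalar multiple of an element of G ∩ S. Let ρ be an encoded state of S, and let K be a matrix in the ℂ-linear span of G such that for every s ∈ S: trace(ρ · K† · s · K) = 1 if s commutes with every element of G, and trace(ρ · K† · s · K) = 0 otherwise. Then (1/|S|) · Σ_{s ∈ S} s K ρ K† s⁻¹ = (1/|G|) · Σ_{a ∈ G} a ρ a⁻¹; that is, depolarizing K ρ K† over S equals depolarizing ρ over G. (Lemma A5.) -/

import Mathlib

open Finset
open scoped symmDiff Matrix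

namespace CC

variable {Q : Type*} [Fintype Q] [DecidableEq Q]

/-- A subgroup of the abelian group `(Finset Q, ∆)`. -/
def IsSubgroup (S : Set (Finset Q)) : Prop :=
  ∅ ∈ S ∧ ∀ a ∈ S, ∀ b ∈ S, a ∆ b ∈ S

/-- The subgroup of `(Finset Q, ∆)` generated by a set. -/
def closure (T : Set (Finset Q)) : Set (Finset Q) :=
  ⋂₀ {S : Set (Finset Q) | IsSubgroup S ∧ T ⊆ S}

/-- A CSS stabilizer code on the qubits `Q`. -/
structure CSS (Q : Type*) [Fintype Q] [DecidableEq Q] where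
  SX : Set (Finset Q)
  SZ : Set (Finset Q)
  hSX : IsSubgroup SX
  hSZ : IsSubgroup SZ
  comm : ∀ a ∈ SZ, ∀ b ∈ SX, 2 ∣ (a ∩ b).card

def ZX (C : CSS Q) : Set (Finset Q) := {γ | ∀ f ∈ C.SZ, 2 ∣ (γ ∩ f).card}

def ZZ (C : CSS Q) : Set (Finset Q) := {z | ∀ c ∈ C.SX, 2 ∣ (z ∩ c).card}

/-- Duality assumption. -/
def Dual (C : CSS Q) : Prop :=
  C.SZ = {z | ∀ γ ∈ ZX C, 2 ∣ (z ∩ γ).card} ∧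
  C.SX = {c | ∀ z ∈ ZZ C, 2 ∣ (c ∩ z).card}

def LogicalX (C : CSS Q) (l : Finset Q) : Prop := l ∈ ZX C ∧ l ∉ C.SX

def LogicalZ (C : CSS Q) (l : Finset Q) : Prop := l ∈ ZZ C ∧ l ∉ C.SZ

/-- Single-logical-qubit assumption. -/
def SingleQubit (C : CSS Q) : Prop :=
  (ZX C ≠ C.SX ∧ ∀ l l', LogicalX C l → LogicalX C l' → l ∆ l' ∈ C.SX) ∧
  (ZZ C ≠ C.SZ ∧ ∀ l l', LogicalZ C l → LogicalZ C l' → l ∆ l' ∈ C.SZ)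

/-- Intersection axiom. -/
def Inter (C : CSS Q) : Prop :=
  ZZ C = {x | ∃ α ∈ ZX C, ∃ β ∈ ZX C, x = α ∩ β}

def G (C : CSS Q) (α : Finset Q) : Set (Finset Q) :=
  closure (C.SZ ∪ {x | ∃ β ∈ ZX C, x = α ∩ β})

def H (C : CSS Q) (α : Finset Q) : Set (Finset Q) :=
  closure (C.SZ ∪ {x | ∃ β ∈ C.SX, x = α ∩ β})

def Zof (K : Set (Finset Q)) : Set (Finset Q) := {γ | ∀ h ∈ K, 2 ∣ (γ ∩ h).card}

def Tolerable (C : CSS Q) (α : Finset Q) : Prop := ∀ z ∈ G C α, ¬ LogicalZ C z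

def g (b : Q → ℤ) (s : Finset Q) : ℤ := ∑ q ∈ s, b q

/-- T-invariance assumption. -/
def TInv (C : CSS Q) (b : Q → ℤ) : Prop :=
  (∀ β ∈ C.SX, (8 : ℤ) ∣ g b β) ∧
  (∀ β ∈ C.SX, ∀ γ ∈ ZX C, (8 : ℤ) ∣ (g b β - 2 * g b (γ ∩ β)))

def E (C : CSS Q) (b : Q → ℤ) (α : Finset Q) : Set (Finset Q) :=
  {z | ∀ γ ∈ Zof (G C α), g b (γ ∩ α) ≡ 2 * ((z ∩ γ).card : ℤ) [ZMOD 4]}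

/- Quantum setting -/

abbrev M (Q : Type*) [Fintype Q] [DecidableEq Q] :=
  Matrix (Q → ZMod 2) (Q → ZMod 2) ℂ

def supp (v : Q → ZMod 2) : Finset Q := Finset.univ.filter (fun q => v q = 1)

def ind (α : Finset Q) : Q → ZMod 2 := fun q => if q ∈ α then 1 else 0

def XM (α : Finset Q) : M Q :=
  Matrix.of fun u v => if u = v + ind α then (1 : ℂ) else 0

noncomputable def ZM (α : Finset Q) : M Q :=
  Matrix.diagonal fun v => (-1 : ℂ) ^ (supp v ∩ α).card

noncomputable def AM (b : Q → ℤ) (α : Finset Q) : M Q :=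
  Matrix.diagonal fun v => Complex.I ^ (g b (α ∩ supp v))

noncomputable def UM (b : Q → ℤ) : M Q :=
  Matrix.diagonal fun v => Complex.exp (Real.pi * Complex.I / 4) ^ (g b (supp v))

def Encoded (C : CSS Q) (ρ : M Q) : Prop :=
  ρ.trace = 1 ∧
  (∀ c ∈ C.SX, XM c * ρ = ρ ∧ ρ * XM c = ρ) ∧
  (∀ f ∈ C.SZ, ZM f * ρ = ρ ∧ ρ * ZM f = ρ)

instance : Std.Commutative (α := Finset Q) (· ∆ ·) := ⟨symmDiff_comm⟩
instance : Std.Associative (α := Finset Q) (· ∆ ·) := ⟨symmDiff_assoc⟩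

/-- Iterated symmetric difference over a finite index set. -/
def bigΔ {ι : Type*} (s : Finset ι) (f : ι → Finset Q) : Finset Q :=
  s.fold (· ∆ ·) ∅ f

/-- The Pauli group on `Q`: the (finite, hence inverse-closed) multiplicative closure of
the single-qubit `X` and `Z` operators together with `i·1`. -/
noncomputable def PauliGroup (Q : Type*) [Fintype Q] [DecidableEq Q] : Set (M Q) :=
  ↑(Submonoid.closure
      ((Set.range fun q : Q => XM {q}) ∪ (Set.range fun q : Q => ZM {q}) ∪
        {Complex.I • (1 : M Q)}))

/-- A subgroup of the Pauli group. -/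
def IsPauliSubgroup (S : Set (M Q)) : Prop :=
  S ⊆ PauliGroup Q ∧ (1 : M Q) ∈ S ∧
  (∀ a ∈ S, ∀ b ∈ S, a * b ∈ S) ∧ (∀ a ∈ S, a⁻¹ ∈ S)

/-- A stabilizer group: an abelian subgroup of the Pauli group whose only element that is
a scalar multiple of the identity is the identity itself. -/
def IsStabilizer (S : Set (M Q)) : Prop :=
  IsPauliSubgroup S ∧ (∀ a ∈ S, ∀ b ∈ S, a * b = b * a) ∧
  (∀ s ∈ S, ∀ c : ℂ, s = c • (1 : M Q) → s = 1)

/- ========== Infrastructure for Lemma A5 ========== -/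

set_option linter.unusedSectionVars false

section A5Infra

lemma zmod2_cases (x : ZMod 2) : x = 0 ∨ x = 1 := by revert x; decide

lemma add_ind_add_ind (v : Q → ZMod 2) (α : Finset Q) : v + ind α + ind α = v := by
  funext q
  show v q + ind α q + ind α q = v q
  rw [add_assoc]
  rcases zmod2_cases (ind α q) with h | h <;> rw [h]
  · rw [add_zero, add_zero]
  · rw [show (1 : ZMod 2) + 1 = 0 by decide, add_zero]

lemma shift_eq_comm {u v : Q → ZMod 2} {α : Finset Q} :
    u = v + ind α ↔ v = u + ind α := by
  constructor <;> rintro rfl <;> rw [add_ind_add_ind]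

lemma XM_mul_XM (α β : Finset Q) :
    XM α * XM β = Matrix.of fun u v => if u = v + ind β + ind α then (1 : ℂ) else 0 := by
  ext u v
  rw [Matrix.mul_apply]
  rw [Finset.sum_eq_single (v + ind β)]
  · simp [XM]
  · intro w _ hw
    simp only [XM, Matrix.of_apply]
    rw [if_neg hw, mul_zero]
  · intro h; exact absurd (Finset.mem_univ _) h

lemma XM_mul_self (α : Finset Q) : XM α * XM α = 1 := by
  rw [XM_mul_XM]
  ext u v
  rw [Matrix.of_apply, Matrix.one_apply, add_ind_add_ind]

lemma XM_comm (α β : Finset Q) : XM α * XM β = XM β * XM α := by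
  rw [XM_mul_XM, XM_mul_XM]
  ext u v
  simp only [Matrix.of_apply]
  rw [add_assoc, add_assoc, add_comm (ind β) (ind α)]

lemma XM_conjTranspose (α : Finset Q) : (XM α)ᴴ = XM α := by
  ext u v
  simp only [Matrix.conjTranspose_apply, XM, Matrix.of_apply]
  rw [if_congr (Iff.symm shift_eq_comm) rfl rfl]
  split <;> simp

lemma ZM_conjTranspose (β : Finset Q) : (ZM β)ᴴ = ZM β := by
  unfold ZM
  rw [Matrix.diagonal_conjTranspose]
  have : (star fun v : Q → ZMod 2 => ((-1 : ℂ)) ^ (supp v ∩ β).card)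
      = fun v : Q → ZMod 2 => ((-1 : ℂ)) ^ (supp v ∩ β).card :=
    funext fun v => by simp [Pi.star_apply, star_pow]
  rw [this]

lemma ZM_mul_self (β : Finset Q) : ZM β * ZM β = 1 := by
  unfold ZM
  rw [Matrix.diagonal_mul_diagonal,
    show (fun i => (-1 : ℂ) ^ (supp i ∩ β).card * (-1 : ℂ) ^ (supp i ∩ β).card) = fun _ => (1 : ℂ)
      from funext fun v => by rw [← pow_add]; exact Even.neg_one_pow ⟨_, rfl⟩,
    Matrix.diagonal_one]

lemma ZM_comm (β γ : Finset Q) : ZM β * ZM γ = ZM γ * ZM β := by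
  unfold ZM
  rw [Matrix.diagonal_mul_diagonal, Matrix.diagonal_mul_diagonal,
    show (fun i : Q → ZMod 2 => ((-1 : ℂ)) ^ (supp i ∩ β).card * ((-1 : ℂ)) ^ (supp i ∩ γ).card)
        = fun i => ((-1 : ℂ)) ^ (supp i ∩ γ).card * ((-1 : ℂ)) ^ (supp i ∩ β).card
      from funext fun i => mul_comm _ _]

lemma neg_one_pow_symmDiff (s t : Finset Q) :
    ((-1 : ℂ)) ^ ((s ∆ t).card) = (-1) ^ s.card * (-1) ^ t.card := by
  have key : (s ∆ t).card + 2 * (s ∩ t).card = s.card + t.card := by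
    rw [symmDiff_def, Finset.sup_eq_union, Finset.card_union_of_disjoint
      disjoint_sdiff_sdiff]
    have h1 := Finset.card_sdiff_add_card_inter s t
    have h2 := Finset.card_sdiff_add_card_inter t s
    rw [Finset.inter_comm t s] at h2
    omega
  have h : ((-1 : ℂ)) ^ ((s ∆ t).card + 2 * (s ∩ t).card) = (-1) ^ (s.card + t.card) := by
    rw [key]
  rw [pow_add, pow_mul, neg_one_sq, one_pow, mul_one] at h
  rw [h, pow_add]

lemma supp_add (v : Q → ZMod 2) (α : Finset Q) :
    supp (v + ind α) = supp v ∆ α := by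
  ext q
  rw [supp, supp, Finset.mem_symmDiff, Finset.mem_filter, Finset.mem_filter]
  simp only [supp, Finset.mem_filter, Finset.mem_univ, true_and, Pi.add_apply,
    Finset.mem_symmDiff, ind]
  by_cases hq : q ∈ α <;>
    rcases zmod2_cases (v q) with h | h <;>
      simp [hq, h]

lemma XM_mul_ZM (α β : Finset Q) :
    XM α * ZM β = ((-1 : ℂ)) ^ ((α ∩ β).card) • (ZM β * XM α) := by
  ext u v
  rw [Matrix.smul_apply]
  unfold ZM
  rw [Matrix.mul_diagonal, Matrix.diagonal_mul]
  simp only [XM, Matrix.of_apply]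
  by_cases h : u = v + ind α
  · rw [if_pos h, mul_one, one_mul]
    subst h
    rw [supp_add, symmDiff_comm]
    have hdist : (α ∆ supp v) ∩ β = (α ∩ β) ∆ (supp v ∩ β) := by
      have := inf_symmDiff_distrib_right (α := Finset Q) α (supp v) β
      simpa using this
    rw [hdist, neg_one_pow_symmDiff, smul_eq_mul, ← mul_assoc, ← pow_add,
      Even.neg_one_pow ⟨_, rfl⟩, one_mul]
  · rw [if_neg h, mul_zero, zero_mul, smul_zero]

end A5Infra
section A5Pauli

lemma mem_pauli_iff {u : M Q} : u ∈ PauliGroup Q ↔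
    u ∈ Submonoid.closure
      ((Set.range fun q : Q => XM {q}) ∪ (Set.range fun q : Q => ZM {q}) ∪
        {Complex.I • (1 : M Q)}) := Iff.rfl

lemma pauli_unitary {u : M Q} (hu : u ∈ PauliGroup Q) : uᴴ * u = 1 := by
  rw [mem_pauli_iff] at hu
  induction hu using Submonoid.closure_induction with
  | mem x hx =>
    rcases hx with (⟨q, rfl⟩ | ⟨q, rfl⟩) | hx
    · rw [XM_conjTranspose, XM_mul_self]
    · rw [ZM_conjTranspose, ZM_mul_self]
    · rw [Set.mem_singleton_iff] at hx
      subst hx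
      rw [Matrix.conjTranspose_smul, Matrix.conjTranspose_one, smul_mul_smul_comm,
        one_mul, Complex.star_def, Complex.conj_I, neg_mul, Complex.I_mul_I, neg_neg,
        one_smul]
  | one => simp
  | mul x y hx hy ihx ihy =>
    rw [Matrix.conjTranspose_mul, mul_assoc, ← mul_assoc xᴴ x y, ihx, one_mul, ihy]

lemma pauli_mul_conjTranspose {u : M Q} (hu : u ∈ PauliGroup Q) : u * uᴴ = 1 :=
  mul_eq_one_comm.mpr (pauli_unitary hu)

lemma pauli_isUnit {u : M Q} (hu : u ∈ PauliGroup Q) : IsUnit u :=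
  ⟨⟨u, uᴴ, pauli_mul_conjTranspose hu, pauli_unitary hu⟩, rfl⟩

lemma pauli_inv {u : M Q} (hu : u ∈ PauliGroup Q) : u⁻¹ = uᴴ :=
  Matrix.inv_eq_left_inv (pauli_unitary hu)

lemma pauli_conjTranspose_mem {u : M Q} (hu : u ∈ PauliGroup Q) :
    uᴴ ∈ PauliGroup Q := by
  rw [mem_pauli_iff] at hu ⊢
  induction hu using Submonoid.closure_induction with
  | mem x hx =>
    rcases hx with (⟨q, rfl⟩ | ⟨q, rfl⟩) | hx
    · rw [XM_conjTranspose]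
      exact Submonoid.subset_closure (Or.inl (Or.inl ⟨q, rfl⟩))
    · rw [ZM_conjTranspose]
      exact Submonoid.subset_closure (Or.inl (Or.inr ⟨q, rfl⟩))
    · rw [Set.mem_singleton_iff] at hx
      subst hx
      have hI : ((Complex.I • (1 : M Q))ᴴ)
          = (Complex.I • (1 : M Q)) * ((Complex.I • (1 : M Q)) * (Complex.I • (1 : M Q))) := by
        rw [Matrix.conjTranspose_smul, Matrix.conjTranspose_one, smul_mul_smul_comm,
          smul_mul_smul_comm, one_mul, one_mul, Complex.I_mul_I, Complex.star_def,
          Complex.conj_I]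
        congr 1
        ring
      rw [hI]
      have hmem := Submonoid.subset_closure
        (s := (Set.range fun q : Q => XM {q}) ∪ (Set.range fun q : Q => ZM {q}) ∪
          {Complex.I • (1 : M Q)}) (Or.inr rfl)
      exact mul_mem hmem (mul_mem hmem hmem)
  | one => rw [Matrix.conjTranspose_one]; exact one_mem _
  | mul x y hx hy ihx ihy => rw [Matrix.conjTranspose_mul]; exact mul_mem ihy ihx

lemma pm_mul_self {e : ℂ} (he : e = 1 ∨ e = -1) : e * e = 1 := by
  rcases he with rfl | rfl <;> norm_num

lemma pm_mul {e f : ℂ} (he : e = 1 ∨ e = -1) (hf : f = 1 ∨ f = -1) :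
    e * f = 1 ∨ e * f = -1 := by
  rcases he with rfl | rfl <;> rcases hf with rfl | rfl <;> norm_num

lemma pauli_pm_comm :
    ∀ u ∈ PauliGroup Q, ∀ v ∈ PauliGroup Q,
      ∃ ε : ℂ, (ε = 1 ∨ ε = -1) ∧ u * v = ε • (v * u) := by
  set gens := (Set.range fun q : Q => XM {q}) ∪ (Set.range fun q : Q => ZM {q}) ∪
      {Complex.I • (1 : M Q)} with hgens
  have hsmul : ∀ m : M Q, ∃ ε : ℂ, (ε = 1 ∨ ε = -1) ∧
      (Complex.I • (1 : M Q)) * m = ε • (m * (Complex.I • (1 : M Q))) := by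
    intro m
    refine ⟨1, Or.inl rfl, ?_⟩
    rw [one_smul, smul_mul_assoc, one_mul, mul_smul_comm, mul_one]
  have hsmul' : ∀ m : M Q, ∃ ε : ℂ, (ε = 1 ∨ ε = -1) ∧
      m * (Complex.I • (1 : M Q)) = ε • ((Complex.I • (1 : M Q)) * m) := by
    intro m
    refine ⟨1, Or.inl rfl, ?_⟩
    rw [one_smul, smul_mul_assoc, one_mul, mul_smul_comm, mul_one]
  have hgen : ∀ x ∈ gens, ∀ y ∈ gens,
      ∃ ε : ℂ, (ε = 1 ∨ ε = -1) ∧ x * y = ε • (y * x) := by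
    intro x hx y hy
    rcases hx with (⟨q, rfl⟩ | ⟨q, rfl⟩) | hx
    · rcases hy with (⟨q', rfl⟩ | ⟨q', rfl⟩) | hy
      · exact ⟨1, Or.inl rfl, by rw [one_smul, XM_comm]⟩
      · refine ⟨(-1 : ℂ) ^ (({q} ∩ {q'} : Finset Q).card), ?_, XM_mul_ZM _ _⟩
        rcases Nat.even_or_odd (({q} ∩ {q'} : Finset Q).card) with h | h
        · exact Or.inl h.neg_one_pow
        · exact Or.inr h.neg_one_pow
      · rw [Set.mem_singleton_iff] at hy; subst hy; exact hsmul' _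
    · rcases hy with (⟨q', rfl⟩ | ⟨q', rfl⟩) | hy
      · refine ⟨(-1 : ℂ) ^ (({q'} ∩ {q} : Finset Q).card), ?_, ?_⟩
        · rcases Nat.even_or_odd (({q'} ∩ {q} : Finset Q).card) with h | h
          · exact Or.inl h.neg_one_pow
          · exact Or.inr h.neg_one_pow
        · have h := XM_mul_ZM (Q := Q) {q'} {q}
          rw [h, smul_smul, pm_mul_self, one_smul]
          rcases Nat.even_or_odd (({q'} ∩ {q} : Finset Q).card) with h' | h'
          · exact Or.inl h'.neg_one_pow
          · exact Or.inr h'.neg_one_pow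
      · exact ⟨1, Or.inl rfl, by rw [one_smul, ZM_comm]⟩
      · rw [Set.mem_singleton_iff] at hy; subst hy; exact hsmul' _
    · rw [Set.mem_singleton_iff] at hx; subst hx; exact hsmul _
  have hB : ∀ u ∈ Submonoid.closure gens, ∀ y ∈ gens,
      ∃ ε : ℂ, (ε = 1 ∨ ε = -1) ∧ u * y = ε • (y * u) := by
    intro u hu
    induction hu using Submonoid.closure_induction with
    | mem x hx => exact hgen x hx
    | one => exact fun y _ => ⟨1, Or.inl rfl, by rw [one_smul, one_mul, mul_one]⟩
    | mul x y hx hy ihx ihy =>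
      intro z hz
      obtain ⟨e1, he1, h1⟩ := ihx z hz
      obtain ⟨e2, he2, h2⟩ := ihy z hz
      refine ⟨e1 * e2, pm_mul he1 he2, ?_⟩
      calc x * y * z = x * (y * z) := by rw [mul_assoc]
        _ = x * (e2 • (z * y)) := by rw [h2]
        _ = e2 • (x * z * y) := by rw [mul_smul_comm, mul_assoc]
        _ = e2 • (e1 • (z * x) * y) := by rw [h1]
        _ = (e1 * e2) • (z * (x * y)) := by
            rw [smul_mul_assoc, smul_smul, mul_comm e2 e1, mul_assoc]
  intro u hu v hv
  rw [mem_pauli_iff] at hu hv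
  induction hv using Submonoid.closure_induction with
  | mem x hx => exact hB u hu x hx
  | one => exact ⟨1, Or.inl rfl, by rw [one_smul, one_mul, mul_one]⟩
  | mul y z hy hz ihy ihz =>
    obtain ⟨e1, he1, h1⟩ := ihy
    obtain ⟨e2, he2, h2⟩ := ihz
    refine ⟨e1 * e2, pm_mul he1 he2, ?_⟩
    calc u * (y * z) = u * y * z := by rw [mul_assoc]
      _ = e1 • (y * (u * z)) := by rw [h1, smul_mul_assoc, mul_assoc]
      _ = e1 • (y * (e2 • (z * u))) := by rw [h2]
      _ = (e1 * e2) • (y * z * u) := by rw [mul_smul_comm, smul_smul, mul_assoc]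

open scoped Classical in
noncomputable def eps (u v : M Q) : ℂ := if u * v = v * u then 1 else -1

lemma eps_pm (u v : M Q) : eps u v = 1 ∨ eps u v = -1 := by
  unfold eps; split
  · exact Or.inl rfl
  · exact Or.inr rfl

lemma eps_sq (u v : M Q) : eps u v * eps u v = 1 := pm_mul_self (eps_pm u v)

lemma eps_star (u v : M Q) : star (eps u v) = eps u v := by
  rcases eps_pm u v with h | h <;> rw [h] <;> simp

lemma eps_of_comm {u v : M Q} (h : u * v = v * u) : eps u v = 1 := by
  unfold eps; rw [if_pos h]

lemma eps_spec {u v : M Q} (hu : u ∈ PauliGroup Q) (hv : v ∈ PauliGroup Q) :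
    u * v = eps u v • (v * u) := by
  by_cases h : u * v = v * u
  · rw [eps_of_comm h, one_smul, h]
  · obtain ⟨e, he, hcomm⟩ := pauli_pm_comm u hu v hv
    rcases he with rfl | rfl
    · rw [one_smul] at hcomm; exact absurd hcomm h
    · unfold eps; rw [if_neg h]; exact hcomm

lemma eps_eq_of {u v : M Q} (hvu : IsUnit (v * u)) {c : ℂ} (hc : c = 1 ∨ c = -1)
    (h : u * v = c • (v * u)) : eps u v = c := by
  by_cases hco : u * v = v * u
  · rw [eps_of_comm hco]
    rcases hc with rfl | rfl
    · rfl
    · exfalso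
      rw [hco, neg_smul, one_smul] at h
      have h2 : v * u + v * u = 0 := by nth_rewrite 2 [h]; simp
      have h3 : (2 : ℂ) • (v * u) = 0 := by rw [two_smul]; exact h2
      rcases smul_eq_zero.mp h3 with h4 | h4
      · norm_num at h4
      · exact hvu.ne_zero h4
  · unfold eps
    rw [if_neg hco]
    rcases hc with rfl | rfl
    · rw [one_smul] at h; exact absurd h hco
    · rfl

lemma eps_mul_left {u v w : M Q} (hu : u ∈ PauliGroup Q) (hv : v ∈ PauliGroup Q)
    (hw : w ∈ PauliGroup Q) : eps (u * v) w = eps u w * eps v w := by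
  refine eps_eq_of ((pauli_isUnit hw).mul ((pauli_isUnit hu).mul (pauli_isUnit hv)))
    (pm_mul (eps_pm u w) (eps_pm v w)) ?_
  calc u * v * w = u * (v * w) := by rw [mul_assoc]
    _ = u * (eps v w • (w * v)) := by rw [eps_spec hv hw]
    _ = eps v w • (u * w * v) := by rw [mul_smul_comm, mul_assoc]
    _ = eps v w • (eps u w • (w * u) * v) := by rw [eps_spec hu hw]
    _ = (eps u w * eps v w) • (w * (u * v)) := by
        rw [smul_mul_assoc, smul_smul, mul_comm (eps v w), mul_assoc]

lemma eps_mul_right {u v w : M Q} (hu : u ∈ PauliGroup Q) (hv : v ∈ PauliGroup Q)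
    (hw : w ∈ PauliGroup Q) : eps u (v * w) = eps u v * eps u w := by
  refine eps_eq_of (((pauli_isUnit hv).mul (pauli_isUnit hw)).mul (pauli_isUnit hu))
    (pm_mul (eps_pm u v) (eps_pm u w)) ?_
  calc u * (v * w) = u * v * w := by rw [mul_assoc]
    _ = eps u v • (v * (u * w)) := by rw [eps_spec hu hv, smul_mul_assoc, mul_assoc]
    _ = eps u v • (v * (eps u w • (w * u))) := by rw [eps_spec hu hw]
    _ = (eps u v * eps u w) • (v * w * u) := by rw [mul_smul_comm, smul_smul, mul_assoc]

lemma eps_conjTranspose {u v : M Q} (hu : u ∈ PauliGroup Q) (hv : v ∈ PauliGroup Q) :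
    eps u vᴴ = eps u v := by
  have hvH := pauli_conjTranspose_mem hv
  refine eps_eq_of ((pauli_isUnit hvH).mul (pauli_isUnit hu)) (eps_pm u v) ?_
  have h1 : vᴴ * (u * v) * vᴴ = vᴴ * (eps u v • (v * u)) * vᴴ := by
    rw [eps_spec hu hv]
  have hL : vᴴ * (u * v) * vᴴ = vᴴ * u := by
    rw [← mul_assoc, mul_assoc (vᴴ * u) v vᴴ, pauli_mul_conjTranspose hv, mul_one]
  have hR : vᴴ * (eps u v • (v * u)) * vᴴ = eps u v • (u * vᴴ) := by
    rw [mul_smul_comm, smul_mul_assoc, ← mul_assoc, pauli_unitary hv, one_mul]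
  rw [hL, hR] at h1
  calc u * vᴴ = (eps u v * eps u v) • (u * vᴴ) := by rw [eps_sq, one_smul]
    _ = eps u v • (vᴴ * u) := by rw [← smul_smul, ← h1]

lemma eps_inv {u v : M Q} (hu : u ∈ PauliGroup Q) (hv : v ∈ PauliGroup Q) :
    eps u v⁻¹ = eps u v := by
  rw [pauli_inv hv, eps_conjTranspose hu hv]

lemma sum_eps_zero {S : Set (M Q)} (hfin : S.Finite) (hP : S ⊆ PauliGroup Q)
    (hmul : ∀ a ∈ S, ∀ b ∈ S, a * b ∈ S) (hinv : ∀ a ∈ S, a⁻¹ ∈ S)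
    {x : M Q} (hx : x ∈ PauliGroup Q) (hnc : ¬ ∀ s ∈ S, x * s = s * x) :
    ∑ s ∈ hfin.toFinset, eps s x = 0 := by
  push_neg at hnc
  obtain ⟨s₀, hs₀S, hs₀⟩ := hnc
  have hs₀P := hP hs₀S
  have hinvmul : s₀ * s₀⁻¹ = 1 := by
    rw [pauli_inv hs₀P]; exact pauli_mul_conjTranspose hs₀P
  have hmulinv : s₀⁻¹ * s₀ = 1 := by
    rw [pauli_inv hs₀P]; exact pauli_unitary hs₀P
  have key : ∑ s ∈ hfin.toFinset, eps s x = ∑ s ∈ hfin.toFinset, eps (s₀ * s) x := by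
    refine Finset.sum_nbij' (fun s => s₀⁻¹ * s) (fun s => s₀ * s) ?_ ?_ ?_ ?_ ?_
    · intro a ha
      rw [Set.Finite.mem_toFinset] at ha ⊢
      exact hmul _ (hinv _ hs₀S) _ ha
    · intro a ha
      rw [Set.Finite.mem_toFinset] at ha ⊢
      exact hmul _ hs₀S _ ha
    · intro a _
      show s₀ * (s₀⁻¹ * a) = a
      rw [← mul_assoc, hinvmul, one_mul]
    · intro a _
      show s₀⁻¹ * (s₀ * a) = a
      rw [← mul_assoc, hmulinv, one_mul]
    · intro a ha
      show eps a x = eps (s₀ * (s₀⁻¹ * a)) x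
      rw [← mul_assoc, hinvmul, one_mul]
  have heps : eps s₀ x = -1 := by
    unfold eps
    rw [if_neg (fun h => hs₀ h.symm)]
  have key2 : ∑ s ∈ hfin.toFinset, eps (s₀ * s) x
      = -∑ s ∈ hfin.toFinset, eps s x := by
    rw [← Finset.sum_neg_distrib]
    refine Finset.sum_congr rfl fun s hs => ?_
    rw [Set.Finite.mem_toFinset] at hs
    rw [eps_mul_left hs₀P (hP hs) hx, heps, neg_one_mul]
  have h4 := key.trans key2
  linear_combination h4 / 2

end A5Pauli

section A5PauliExtra

lemma pauli_mul_mem {u v : M Q} (hu : u ∈ PauliGroup Q) (hv : v ∈ PauliGroup Q) :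
    u * v ∈ PauliGroup Q := by
  rw [mem_pauli_iff] at hu hv ⊢
  exact mul_mem hu hv

lemma eps_comm (u v : M Q) : eps u v = eps v u := by
  unfold eps
  rw [if_congr eq_comm rfl rfl]

lemma eps_spec' {u v : M Q} (hu : u ∈ PauliGroup Q) (hv : v ∈ PauliGroup Q) :
    v * u = eps u v • (u * v) := by
  rw [eps_spec hu hv, smul_smul, eps_sq, one_smul]

lemma eps_specH {u v : M Q} (hu : u ∈ PauliGroup Q) (hv : v ∈ PauliGroup Q) :
    vᴴ * uᴴ = eps u v • (uᴴ * vᴴ) := by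
  have h := congrArg Matrix.conjTranspose (eps_spec hu hv)
  rw [Matrix.conjTranspose_mul, Matrix.conjTranspose_smul, Matrix.conjTranspose_mul,
    eps_star] at h
  exact h

end A5PauliExtra
section A5Main

/-- `x` commutes with everything in `S`. -/
def CommP (S : Set (M Q)) (x : M Q) : Prop := ∀ s ∈ S, x * s = s * x

open scoped Classical in
/-- Coefficient function used in the proof of Lemma A5. -/
noncomputable def Wc (S : Set (M Q)) (ρ : M Q) (d : M Q →₀ ℂ) (a b : M Q) : ℂ :=
  if CommP S (a * bᴴ) then d a * star (d b) * star ((ρ * (aᴴ * b)).trace) else 0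

end A5Main
set_option maxHeartbeats 2000000 in
/-- Lemma A5: depolarizing `K ρ K†` over the stabilizer `S` equals depolarizing `ρ` over
the Pauli group `G`. -/
theorem depolarization_S_eq_depolarization_G
    (S G : Set (M Q)) (hS : IsStabilizer S) (hSfin : S.Finite)
    (hG : IsPauliSubgroup G) (hGfin : G.Finite)
    (hGS : ∀ a ∈ G, (∀ s ∈ S, a * s = s * a) →
      ∃ c : ℂ, ‖c‖ = 1 ∧ ∃ h, h ∈ G ∧ h ∈ S ∧ a = c • h)
    (ρ : M Q) (hρtr : ρ.trace = 1) (hρ : ∀ s ∈ S, s * ρ = ρ ∧ ρ * s = ρ)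
    (K : M Q) (hK : K ∈ Submodule.span ℂ G)
    (hKexp : ∀ s ∈ S,
      ((∀ a ∈ G, s * a = a * s) → (ρ * (Kᴴ * s * K)).trace = 1) ∧
      (¬ (∀ a ∈ G, s * a = a * s) → (ρ * (Kᴴ * s * K)).trace = 0)) :
    ((hSfin.toFinset.card : ℂ))⁻¹ •
        ∑ s ∈ hSfin.toFinset, s * (K * ρ * Kᴴ) * s⁻¹
      = ((hGfin.toFinset.card : ℂ))⁻¹ •
        ∑ a ∈ hGfin.toFinset, a * ρ * a⁻¹ := by
  classical
  obtain ⟨⟨hSP, hS1, hSmul, hSinv⟩, hScomm, hSscal⟩ := hS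
  obtain ⟨hGP, hG1, hGmul, hGinv⟩ := hG
  set Sf := hSfin.toFinset with hSfdef
  set Gf := hGfin.toFinset with hGfdef
  have hmemS : ∀ {s : M Q}, s ∈ Sf → s ∈ S := fun {s} hs => (Set.Finite.mem_toFinset hSfin).mp hs
  have hmemG : ∀ {g : M Q}, g ∈ Gf → g ∈ G := fun {g} hg => (Set.Finite.mem_toFinset hGfin).mp hg
  have hSmem : ∀ {s : M Q}, s ∈ S → s ∈ Sf := fun {s} hs => (Set.Finite.mem_toFinset hSfin).mpr hs
  have hGmem : ∀ {g : M Q}, g ∈ G → g ∈ Gf := fun {g} hg => (Set.Finite.mem_toFinset hGfin).mpr hg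
  have hGH : ∀ a ∈ G, aᴴ ∈ G := fun a ha => by
    rw [← pauli_inv (hGP ha)]; exact hGinv a ha
  have hSH : ∀ s ∈ S, sᴴ ∈ S := fun s hs => by
    rw [← pauli_inv (hSP hs)]; exact hSinv s hs
  have hρH : ∀ s ∈ S, ρ * sᴴ = ρ := fun s hs => (hρ _ (hSH s hs)).2
  obtain ⟨d, hdsupp, hdsum⟩ := Submodule.mem_span_set.mp hK
  set A := d.support with hAdef
  have hA : ∀ a ∈ A, a ∈ G := fun a ha => hdsupp ha
  have hKrep : K = ∑ a ∈ A, d a • a := by rw [← hdsum]; rfl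
  have hKH : Kᴴ = ∑ b ∈ A, star (d b) • bᴴ := by
    rw [hKrep, Matrix.conjTranspose_sum]
    exact Finset.sum_congr rfl fun b _ => Matrix.conjTranspose_smul _ _
  have hScard0 : (Sf.card : ℂ) ≠ 0 :=
    Nat.cast_ne_zero.mpr (Finset.card_ne_zero_of_mem (hSmem hS1))
  have hGcard0 : (Gf.card : ℂ) ≠ 0 :=
    Nat.cast_ne_zero.mpr (Finset.card_ne_zero_of_mem (hGmem hG1))
  set Nf := Gf.filter (fun g => ∀ s ∈ S, g * s = s * g) with hNfdef
  set Zf := Sf.filter (fun s => ∀ a ∈ G, s * a = a * s) with hZfdef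
  have hNcard0 : (Nf.card : ℂ) ≠ 0 := by
    refine Nat.cast_ne_zero.mpr (Finset.card_ne_zero_of_mem (a := 1) ?_)
    exact Finset.mem_filter.mpr ⟨hGmem hG1, fun s _ => by rw [one_mul, mul_one]⟩
  -- conjugation of a single term by s
  have hconj_term : ∀ s ∈ S, ∀ a ∈ G, ∀ b ∈ G,
      s * (a * ρ * bᴴ) * sᴴ = (eps s a * eps s b) • (a * ρ * bᴴ) := by
    intro s hsS a haG b hbG
    have hsP := hSP hsS
    have haP := hGP haG
    have hbP := hGP hbG
    have h1 : bᴴ * sᴴ = eps s b • (sᴴ * bᴴ) := eps_specH hsP hbP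
    simp only [mul_assoc]
    rw [h1]
    simp only [mul_smul_comm]
    rw [← mul_assoc ρ sᴴ bᴴ, hρH s hsS, ← mul_assoc s a, eps_spec hsP haP,
      smul_mul_assoc, mul_assoc a s, ← mul_assoc s ρ, (hρ s hsS).1, smul_smul,
      mul_comm (eps s b)]
  -- expansion of K ρ Kᴴ
  have hRK : K * ρ * Kᴴ = ∑ a ∈ A, ∑ b ∈ A, (d a * star (d b)) • (a * ρ * bᴴ) := by
    rw [hKH, hKrep, Finset.sum_mul, Finset.sum_mul]
    refine Finset.sum_congr rfl fun a _ => ?_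
    rw [Finset.mul_sum]
    refine Finset.sum_congr rfl fun b _ => ?_
    rw [smul_mul_assoc, smul_mul_assoc, mul_smul_comm, smul_smul]
  have hexpand : ∀ s ∈ S, s * (K * ρ * Kᴴ) * sᴴ
      = ∑ a ∈ A, ∑ b ∈ A, ((d a * star (d b)) * (eps s a * eps s b)) • (a * ρ * bᴴ) := by
    intro s hsS
    rw [hRK, Finset.mul_sum, Finset.sum_mul]
    refine Finset.sum_congr rfl fun a ha => ?_
    rw [Finset.mul_sum, Finset.sum_mul]
    refine Finset.sum_congr rfl fun b hb => ?_
    rw [mul_smul_comm, smul_mul_assoc, hconj_term s hsS a (hA a ha) b (hA b hb), smul_smul]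
  -- orthogonality
  have horth : ∀ a ∈ G, ∀ b ∈ G, ∑ s ∈ Sf, eps s a * eps s b
      = if CommP S (a * bᴴ) then (Sf.card : ℂ) else 0 := by
    intro a haG b hbG
    have hxG : a * bᴴ ∈ G := hGmul _ haG _ (hGH b hbG)
    have hstep : ∀ s ∈ Sf, eps s a * eps s b = eps s (a * bᴴ) := by
      intro s hs
      have hsP := hSP (hmemS hs)
      rw [eps_mul_right hsP (hGP haG) (pauli_conjTranspose_mem (hGP hbG)),
        eps_conjTranspose hsP (hGP hbG)]
    rw [Finset.sum_congr rfl hstep]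
    by_cases hcp : CommP S (a * bᴴ)
    · rw [if_pos hcp]
      have hone : ∀ s ∈ Sf, eps s (a * bᴴ) = 1 := fun s hs =>
        eps_of_comm ((hcp s (hmemS hs)).symm)
      rw [Finset.sum_congr rfl hone, Finset.sum_const, nsmul_eq_mul, mul_one]
    · rw [if_neg hcp]
      exact sum_eps_zero hSfin hSP hSmul hSinv (hGP hxG) hcp
  -- pair reduction lemma
  have hpair : ∀ a ∈ G, ∀ b ∈ G, CommP S (a * bᴴ) →
      a * ρ * bᴴ = star ((ρ * (aᴴ * b)).trace) • (b * ρ * bᴴ) := by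
    intro a haG b hbG hcp
    have haP := hGP haG
    have hbP := hGP hbG
    obtain ⟨c, hc1, h, hhG, hhS, hxeq⟩ :=
      hGS (a * bᴴ) (hGmul _ haG _ (hGH b hbG)) (fun s hs => hcp s hs)
    have hhP := hGP hhG
    have hab : a = a * bᴴ * b := by
      rw [mul_assoc, pauli_unitary hbP, mul_one]
    have heq1 : a * ρ * bᴴ = (c * eps h b) • (b * ρ * bᴴ) := by
      conv_lhs => rw [hab, hxeq]
      rw [smul_mul_assoc, smul_mul_assoc, smul_mul_assoc, eps_spec hhP hbP,
        smul_mul_assoc, smul_mul_assoc, mul_assoc b h ρ, (hρ h hhS).1, smul_smul]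
    have hhb : hᴴ * b = eps h b • (b * hᴴ) := by
      have h2 := eps_spec (pauli_conjTranspose_mem hhP) hbP
      rw [show eps hᴴ b = eps h b by
        rw [eps_comm hᴴ b, eps_conjTranspose hbP hhP, eps_comm b h]] at h2
      exact h2
    have haH : aᴴ = star c • (bᴴ * hᴴ) := by
      conv_lhs => rw [hab, hxeq]
      rw [Matrix.conjTranspose_mul, Matrix.conjTranspose_smul, mul_smul_comm]
    have hv : (ρ * (aᴴ * b)).trace = star c * eps h b := by
      rw [haH, smul_mul_assoc, mul_assoc bᴴ hᴴ b, hhb]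
      simp only [mul_smul_comm, Matrix.mul_smul, smul_smul, Matrix.trace_smul,
        smul_eq_mul]
      rw [← mul_assoc bᴴ b hᴴ, pauli_unitary hbP, one_mul, hρH h hhS, hρtr, mul_one]
    rw [heq1, hv]
    congr 1
    rw [star_mul', star_star, eps_star]
  -- conjugation invariance within a class
  have hconjinv : ∀ b₀ ∈ G, ∀ b ∈ G, CommP S (b₀ * bᴴ) →
      b₀ * ρ * b₀ᴴ = b * ρ * bᴴ := by
    intro b₀ hb₀G b hbG hcp
    have hb₀P := hGP hb₀G
    have hbP := hGP hbG
    obtain ⟨c, hc1, h, hhG, hhS, hxeq⟩ :=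
      hGS (b₀ * bᴴ) (hGmul _ hb₀G _ (hGH b hbG)) (fun s hs => hcp s hs)
    have hhP := hGP hhG
    have hcc : c * star c = 1 := by
      rw [Complex.star_def, Complex.mul_conj, ← Complex.sq_norm, hc1]
      norm_num
    have hab : b₀ = b₀ * bᴴ * b := by
      rw [mul_assoc, pauli_unitary hbP, mul_one]
    have hρh : h * ρ = ρ := (hρ h hhS).1
    have hbh : bᴴ * hᴴ = eps h b • (hᴴ * bᴴ) := eps_specH hhP hbP
    calc b₀ * ρ * b₀ᴴ = ((c • h) * b) * ρ * ((c • h) * b)ᴴ := by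
          conv_lhs => rw [hab, hxeq]
      _ = b * ρ * bᴴ := by
          rw [Matrix.conjTranspose_mul, Matrix.conjTranspose_smul,
            smul_mul_assoc, smul_mul_assoc, smul_mul_assoc,
            mul_smul_comm (star c) bᴴ hᴴ, mul_smul_comm, smul_smul,
            mul_comm c (star c)]
          rw [show star c * c = 1 by rw [mul_comm]; exact hcc, one_smul]
          rw [hbh, mul_smul_comm, eps_spec hhP hbP, smul_mul_assoc, smul_mul_assoc,
            smul_smul, eps_sq, one_smul, mul_assoc b h ρ, hρh,
            ← mul_assoc (b * ρ) hᴴ bᴴ, mul_assoc b ρ hᴴ, hρH h hhS]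
  -- trace vanishing for non-commuting pairs
  have htrace0 : ∀ a ∈ G, ∀ b ∈ G, ¬ CommP S (a * bᴴ) → (ρ * (aᴴ * b)).trace = 0 := by
    intro a haG b hbG hncp
    have haP := hGP haG
    have hbP := hGP hbG
    have himp : CommP S (aᴴ * b) → CommP S (a * bᴴ) := by
      intro hy s hs
      have hsP := hSP hs
      have hyH : s * (aᴴ * b)ᴴ = (aᴴ * b)ᴴ * s := by
        have h1 := hy sᴴ (hSH s hs)
        have h2 := congrArg Matrix.conjTranspose h1
        simpa [Matrix.conjTranspose_mul] using h2
      have hbeq : bᴴ = (aᴴ * b)ᴴ * aᴴ := by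
        rw [Matrix.conjTranspose_mul, Matrix.conjTranspose_conjTranspose, mul_assoc,
          pauli_mul_conjTranspose haP, mul_one]
      rw [hbeq]
      have has : aᴴ * s = eps s a • (s * aᴴ) := by
        have h3 := eps_spec' hsP (pauli_conjTranspose_mem haP)
        rwa [eps_conjTranspose hsP haP] at h3
      have hsa : a * s = eps s a • (s * a) := eps_spec' hsP haP
      simp only [mul_assoc]
      rw [has]
      simp only [mul_smul_comm]
      rw [← mul_assoc ((aᴴ * b)ᴴ) s aᴴ, ← hyH, mul_assoc s ((aᴴ * b)ᴴ) aᴴ,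
        ← mul_assoc a s, hsa, smul_mul_assoc, smul_smul, eps_sq, one_smul,
        mul_assoc s a]
    have hncp' : ¬ CommP S (aᴴ * b) := fun hy => hncp (himp hy)
    unfold CommP at hncp'
    push_neg at hncp'
    obtain ⟨s₀, hs₀S, hne⟩ := hncp'
    have hs₀P := hSP hs₀S
    have hyP : aᴴ * b ∈ PauliGroup Q := pauli_mul_mem (pauli_conjTranspose_mem haP) hbP
    have heneg : eps s₀ (aᴴ * b) = -1 := by
      unfold eps
      rw [if_neg (fun hcm => hne hcm.symm)]
    have hflip : (aᴴ * b) * s₀ = eps s₀ (aᴴ * b) • (s₀ * (aᴴ * b)) := eps_spec' hs₀P hyP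
    have step : (ρ * (aᴴ * b)).trace = -(ρ * (aᴴ * b)).trace := by
      conv_lhs => rw [← (hρ s₀ hs₀S).1]
      rw [mul_assoc, Matrix.trace_mul_comm, mul_assoc ρ, hflip, heneg,
        Matrix.mul_smul, Matrix.trace_smul, smul_eq_mul, ← mul_assoc ρ s₀,
        (hρ s₀ hs₀S).2, neg_one_mul]
    linear_combination step / 2
  -- trace of a single term
  have htrace_term : ∀ s ∈ S, ∀ a ∈ G, ∀ b ∈ G,
      (ρ * (aᴴ * s * b)).trace = eps s b * (ρ * (aᴴ * b)).trace := by
    intro s hsS a haG b hbG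
    have hsP := hSP hsS
    have hbP := hGP hbG
    have h2 : aᴴ * s * b = eps s b • ((aᴴ * b) * s) := by
      rw [mul_assoc, eps_spec hsP hbP, mul_smul_comm, ← mul_assoc]
    rw [h2, Matrix.mul_smul, Matrix.trace_smul, smul_eq_mul]
    congr 1
    rw [← mul_assoc, Matrix.trace_mul_comm, ← mul_assoc, (hρ s hsS).1]
  -- expansion of the measured traces
  have hKsK : ∀ s : M Q, ρ * (Kᴴ * s * K)
      = ∑ a ∈ A, ∑ b ∈ A, (star (d a) * d b) • (ρ * (aᴴ * s * b)) := by
    intro s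
    rw [hKH, hKrep, Finset.sum_mul, Finset.sum_mul, Finset.mul_sum]
    refine Finset.sum_congr rfl fun a ha => ?_
    rw [Finset.mul_sum, Finset.mul_sum]
    refine Finset.sum_congr rfl fun b hb => ?_
    rw [smul_mul_assoc, smul_mul_assoc, mul_smul_comm, mul_smul_comm, mul_smul_comm,
      smul_smul]
  have hfexp : ∀ s ∈ S, (ρ * (Kᴴ * s * K)).trace
      = ∑ a ∈ A, ∑ b ∈ A, star (Wc S ρ d a b) * eps s b := by
    intro s hsS
    rw [hKsK s, Matrix.trace_sum]
    refine Finset.sum_congr rfl fun a ha => ?_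
    rw [Matrix.trace_sum]
    refine Finset.sum_congr rfl fun b hb => ?_
    rw [Matrix.trace_smul, smul_eq_mul, htrace_term s hsS a (hA a ha) b (hA b hb)]
    unfold Wc
    by_cases hcp : CommP S (a * bᴴ)
    · rw [if_pos hcp]
      simp only [star_mul', star_star]
      ring
    · rw [if_neg hcp, star_zero, zero_mul, htrace0 a (hA a ha) b (hA b hb) hcp]
      ring
  have hstarf : ∀ s ∈ S, star ((ρ * (Kᴴ * s * K)).trace)
      = ∑ a ∈ A, ∑ b ∈ A, Wc S ρ d a b * eps s b := by
    intro s hsS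
    rw [hfexp s hsS, star_sum]
    refine Finset.sum_congr rfl fun a _ => ?_
    rw [star_sum]
    refine Finset.sum_congr rfl fun b _ => ?_
    rw [star_mul', star_star, eps_star]
  have hfval : ∀ s ∈ S, star ((ρ * (Kᴴ * s * K)).trace)
      = if (∀ a ∈ G, s * a = a * s) then (1 : ℂ) else 0 := by
    intro s hsS
    by_cases hc : ∀ a ∈ G, s * a = a * s
    · rw [if_pos hc, (hKexp s hsS).1 hc, star_one]
    · rw [if_neg hc, (hKexp s hsS).2 hc, star_zero]
  -- Equation I
  have hEqI : ∑ s ∈ Sf, s * (K * ρ * Kᴴ) * sᴴ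
      = (Sf.card : ℂ) • ∑ a ∈ A, ∑ b ∈ A, Wc S ρ d a b • (b * ρ * bᴴ) := by
    calc ∑ s ∈ Sf, s * (K * ρ * Kᴴ) * sᴴ
        = ∑ s ∈ Sf, ∑ a ∈ A, ∑ b ∈ A,
            ((d a * star (d b)) * (eps s a * eps s b)) • (a * ρ * bᴴ) :=
          Finset.sum_congr rfl fun s hs => hexpand s (hmemS hs)
      _ = ∑ a ∈ A, ∑ b ∈ A, ∑ s ∈ Sf,
            ((d a * star (d b)) * (eps s a * eps s b)) • (a * ρ * bᴴ) := by
          rw [Finset.sum_comm]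
          exact Finset.sum_congr rfl fun a _ => Finset.sum_comm
      _ = ∑ a ∈ A, ∑ b ∈ A,
            ((d a * star (d b)) * (if CommP S (a * bᴴ) then (Sf.card : ℂ) else 0))
              • (a * ρ * bᴴ) := by
          refine Finset.sum_congr rfl fun a ha => Finset.sum_congr rfl fun b hb => ?_
          rw [← horth a (hA a ha) b (hA b hb), Finset.mul_sum, Finset.sum_smul]
      _ = ∑ a ∈ A, ∑ b ∈ A, (Sf.card : ℂ) • (Wc S ρ d a b • (b * ρ * bᴴ)) := by
          refine Finset.sum_congr rfl fun a ha => Finset.sum_congr rfl fun b hb => ?_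
          unfold Wc
          by_cases hcp : CommP S (a * bᴴ)
          · simp only [if_pos hcp]
            rw [hpair a (hA a ha) b (hA b hb) hcp, smul_smul, smul_smul]
            congr 1
            ring
          · simp only [if_neg hcp]
            rw [mul_zero, zero_smul, zero_smul, smul_zero]
      _ = (Sf.card : ℂ) • ∑ a ∈ A, ∑ b ∈ A, Wc S ρ d a b • (b * ρ * bᴴ) := by
          rw [Finset.smul_sum]
          exact Finset.sum_congr rfl fun a _ => by rw [Finset.smul_sum]
  -- Equation IV
  have hIV : ∀ b₀ ∈ G, ∑ a ∈ A, ∑ b ∈ A,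
      Wc S ρ d a b * (if CommP S (b₀ * bᴴ) then (1 : ℂ) else 0)
      = (Zf.card : ℂ) / (Sf.card : ℂ) := by
    intro b₀ hb₀
    have way1 : ∑ s ∈ Sf, eps s b₀ * star ((ρ * (Kᴴ * s * K)).trace) = (Zf.card : ℂ) := by
      calc ∑ s ∈ Sf, eps s b₀ * star ((ρ * (Kᴴ * s * K)).trace)
          = ∑ s ∈ Sf, (if (∀ a ∈ G, s * a = a * s) then eps s b₀ else 0) := by
            refine Finset.sum_congr rfl fun s hs => ?_
            rw [hfval s (hmemS hs), mul_ite, mul_one, mul_zero]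
        _ = ∑ s ∈ Zf, eps s b₀ := (Finset.sum_filter _ _).symm
        _ = ∑ s ∈ Zf, 1 := Finset.sum_congr rfl fun s hs => by
              obtain ⟨hsS', hscomm⟩ := Finset.mem_filter.mp hs
              exact eps_of_comm (hscomm b₀ hb₀)
        _ = (Zf.card : ℂ) := by rw [Finset.sum_const, nsmul_eq_mul, mul_one]
    have way2 : ∑ s ∈ Sf, eps s b₀ * star ((ρ * (Kᴴ * s * K)).trace)
        = (Sf.card : ℂ) * ∑ a ∈ A, ∑ b ∈ A,
            Wc S ρ d a b * (if CommP S (b₀ * bᴴ) then (1 : ℂ) else 0) := by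
      calc ∑ s ∈ Sf, eps s b₀ * star ((ρ * (Kᴴ * s * K)).trace)
          = ∑ s ∈ Sf, ∑ a ∈ A, ∑ b ∈ A, Wc S ρ d a b * (eps s b₀ * eps s b) := by
            refine Finset.sum_congr rfl fun s hs => ?_
            rw [hstarf s (hmemS hs), Finset.mul_sum]
            refine Finset.sum_congr rfl fun a _ => ?_
            rw [Finset.mul_sum]
            exact Finset.sum_congr rfl fun b _ => by ring
        _ = ∑ a ∈ A, ∑ b ∈ A, ∑ s ∈ Sf, Wc S ρ d a b * (eps s b₀ * eps s b) := by
            rw [Finset.sum_comm]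
            exact Finset.sum_congr rfl fun a _ => Finset.sum_comm
        _ = ∑ a ∈ A, ∑ b ∈ A,
              Wc S ρ d a b * (if CommP S (b₀ * bᴴ) then (Sf.card : ℂ) else 0) := by
            refine Finset.sum_congr rfl fun a _ => Finset.sum_congr rfl fun b hb => ?_
            rw [← Finset.mul_sum, horth b₀ hb₀ b (hA b hb)]
        _ = (Sf.card : ℂ) * ∑ a ∈ A, ∑ b ∈ A,
              Wc S ρ d a b * (if CommP S (b₀ * bᴴ) then (1 : ℂ) else 0) := by
            rw [Finset.mul_sum]
            refine Finset.sum_congr rfl fun a _ => ?_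
            rw [Finset.mul_sum]
            refine Finset.sum_congr rfl fun b _ => ?_
            split_ifs <;> ring
    rw [eq_div_iff hScard0]
    linear_combination way2.symm.trans way1
  -- counting lemma
  have hcount : ∀ b ∈ G, ∑ b₀ ∈ Gf,
      (if CommP S (b₀ * bᴴ) then (1 : ℂ) else 0) • (b₀ * ρ * b₀ᴴ)
      = (Nf.card : ℂ) • (b * ρ * bᴴ) := by
    intro b hbG
    have hsum : ∑ b₀ ∈ Gf, (if CommP S (b₀ * bᴴ) then (1 : ℂ) else 0) • (b₀ * ρ * b₀ᴴ)
        = ∑ b₀ ∈ Gf.filter (fun b₀ => CommP S (b₀ * bᴴ)), b₀ * ρ * b₀ᴴ := by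
      rw [Finset.sum_filter]
      refine Finset.sum_congr rfl fun b₀ _ => ?_
      split_ifs <;> simp
    rw [hsum]
    have hcongr : ∀ b₀ ∈ Gf.filter (fun b₀ => CommP S (b₀ * bᴴ)),
        b₀ * ρ * b₀ᴴ = b * ρ * bᴴ := fun b₀ hb₀ => by
      obtain ⟨hb₀Gf, hcp⟩ := Finset.mem_filter.mp hb₀
      exact hconjinv b₀ (hmemG hb₀Gf) b hbG hcp
    rw [Finset.sum_congr rfl hcongr, Finset.sum_const]
    have hcard : (Gf.filter (fun b₀ => CommP S (b₀ * bᴴ))).card = Nf.card := by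
      refine Finset.card_nbij' (fun b₀ => b₀ * bᴴ) (fun n => n * b) ?_ ?_ ?_ ?_
      · intro b₀ hb₀
        obtain ⟨h1, h2⟩ := Finset.mem_filter.mp hb₀
        exact Finset.mem_filter.mpr ⟨hGmem (hGmul _ (hmemG h1) _ (hGH b hbG)), h2⟩
      · intro n hn
        obtain ⟨h1, h2⟩ := Finset.mem_filter.mp hn
        refine Finset.mem_filter.mpr ⟨hGmem (hGmul _ (hmemG h1) _ hbG), ?_⟩
        show CommP S ((n * b) * bᴴ)
        have hnb : (n * b) * bᴴ = n := by
          rw [mul_assoc, pauli_mul_conjTranspose (hGP hbG), mul_one]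
        rw [hnb]
        exact h2
      · intro b₀ _
        show (b₀ * bᴴ) * b = b₀
        rw [mul_assoc, pauli_unitary (hGP hbG), mul_one]
      · intro n _
        show (n * b) * bᴴ = n
        rw [mul_assoc, pauli_mul_conjTranspose (hGP hbG), mul_one]
    rw [hcard, ← Nat.cast_smul_eq_nsmul ℂ]
  -- master identity
  have hmaster : ((Zf.card : ℂ) / (Sf.card : ℂ)) • ∑ g ∈ Gf, g * ρ * gᴴ
      = (Nf.card : ℂ) • ∑ a ∈ A, ∑ b ∈ A, Wc S ρ d a b • (b * ρ * bᴴ) := by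
    rw [Finset.smul_sum]
    calc ∑ b₀ ∈ Gf, ((Zf.card : ℂ) / (Sf.card : ℂ)) • (b₀ * ρ * b₀ᴴ)
        = ∑ b₀ ∈ Gf, (∑ a ∈ A, ∑ b ∈ A,
            Wc S ρ d a b * (if CommP S (b₀ * bᴴ) then (1 : ℂ) else 0)) • (b₀ * ρ * b₀ᴴ) := by
          refine Finset.sum_congr rfl fun b₀ hb₀ => ?_
          rw [hIV b₀ (hmemG hb₀)]
      _ = ∑ b₀ ∈ Gf, ∑ a ∈ A, ∑ b ∈ A,
            (Wc S ρ d a b * (if CommP S (b₀ * bᴴ) then (1 : ℂ) else 0)) • (b₀ * ρ * b₀ᴴ) := by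
          refine Finset.sum_congr rfl fun b₀ _ => ?_
          rw [Finset.sum_smul]
          exact Finset.sum_congr rfl fun a _ => by rw [Finset.sum_smul]
      _ = ∑ a ∈ A, ∑ b ∈ A, ∑ b₀ ∈ Gf,
            (Wc S ρ d a b * (if CommP S (b₀ * bᴴ) then (1 : ℂ) else 0)) • (b₀ * ρ * b₀ᴴ) := by
          rw [Finset.sum_comm]
          exact Finset.sum_congr rfl fun a _ => Finset.sum_comm
      _ = ∑ a ∈ A, ∑ b ∈ A, Wc S ρ d a b • ((Nf.card : ℂ) • (b * ρ * bᴴ)) := by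
          refine Finset.sum_congr rfl fun a _ => Finset.sum_congr rfl fun b hb => ?_
          rw [← hcount b (hA b hb), Finset.smul_sum]
          refine Finset.sum_congr rfl fun b₀ _ => ?_
          rw [smul_smul]
      _ = (Nf.card : ℂ) • ∑ a ∈ A, ∑ b ∈ A, Wc S ρ d a b • (b * ρ * bᴴ) := by
          rw [Finset.smul_sum]
          refine Finset.sum_congr rfl fun a _ => ?_
          rw [Finset.smul_sum]
          exact Finset.sum_congr rfl fun b _ => smul_comm _ _ _
  -- traces
  have htrKρK : (K * ρ * Kᴴ).trace = 1 := by
    rw [Matrix.trace_mul_cycle]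
    have h1 := (hKexp 1 hS1).1 (fun a _ => by rw [one_mul, mul_one])
    rw [mul_one] at h1
    rw [Matrix.trace_mul_comm]
    exact h1
  have htrS : (∑ s ∈ Sf, s * (K * ρ * Kᴴ) * sᴴ).trace = (Sf.card : ℂ) := by
    rw [Matrix.trace_sum]
    have hterm : ∀ s ∈ Sf, (s * (K * ρ * Kᴴ) * sᴴ).trace = 1 := by
      intro s hs
      rw [Matrix.trace_mul_cycle, pauli_unitary (hSP (hmemS hs)), one_mul, htrKρK]
    rw [Finset.sum_congr rfl hterm, Finset.sum_const, nsmul_eq_mul, mul_one]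
  have htrG : (∑ g ∈ Gf, g * ρ * gᴴ).trace = (Gf.card : ℂ) := by
    rw [Matrix.trace_sum]
    have hterm : ∀ g ∈ Gf, (g * ρ * gᴴ).trace = 1 := by
      intro g hg
      rw [Matrix.trace_mul_cycle, pauli_unitary (hGP (hmemG hg)), one_mul, hρtr]
    rw [Finset.sum_congr rfl hterm, Finset.sum_const, nsmul_eq_mul, mul_one]
  have htrD : (∑ a ∈ A, ∑ b ∈ A, Wc S ρ d a b • (b * ρ * bᴴ)).trace = 1 := by
    have h1 := congrArg Matrix.trace hEqI
    rw [htrS, Matrix.trace_smul, smul_eq_mul] at h1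
    have h2 : (Sf.card : ℂ) * 1 = (Sf.card : ℂ)
        * (∑ a ∈ A, ∑ b ∈ A, Wc S ρ d a b • (b * ρ * bᴴ)).trace := by
      rw [mul_one]
      exact h1
    exact (mul_left_cancel₀ hScard0 h2).symm
  have hscal : (Zf.card : ℂ) / (Sf.card : ℂ) * (Gf.card : ℂ) = (Nf.card : ℂ) := by
    have h1 := congrArg Matrix.trace hmaster
    rw [Matrix.trace_smul, Matrix.trace_smul, htrG, htrD, smul_eq_mul, smul_eq_mul,
      mul_one] at h1
    exact h1
  -- final assembly
  have hgoalL : ∑ s ∈ Sf, s * (K * ρ * Kᴴ) * s⁻¹ = ∑ s ∈ Sf, s * (K * ρ * Kᴴ) * sᴴ :=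
    Finset.sum_congr rfl fun s hs => by rw [pauli_inv (hSP (hmemS hs))]
  have hgoalR : ∑ g ∈ Gf, g * ρ * g⁻¹ = ∑ g ∈ Gf, g * ρ * gᴴ :=
    Finset.sum_congr rfl fun g hg => by rw [pauli_inv (hGP (hmemG hg))]
  rw [hgoalL, hgoalR, hEqI, smul_smul, inv_mul_cancel₀ hScard0, one_smul]
  -- goal : ∑∑ W • (bρbᴴ) = (Gf.card)⁻¹ • ∑ g ρ gᴴ
  have hfin : (Nf.card : ℂ) • ∑ a ∈ A, ∑ b ∈ A, Wc S ρ d a b • (b * ρ * bᴴ)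
      = (Nf.card : ℂ) • ((Gf.card : ℂ))⁻¹ • ∑ g ∈ Gf, g * ρ * gᴴ := by
    rw [← hmaster, smul_smul]
    congr 1
    rw [← hscal, mul_assoc, mul_inv_cancel₀ hGcard0, mul_one]
  have := smul_right_injective (M Q) hNcard0 hfin
  exact this
end CC
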